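/- Let f : F_q → F_q and suppose the line y = mx + b meets the graph {(x, f(x)) : x ∈ F_q} in exactly k points for some 1 < k < q. Then |(D_f - m)^{-1}(D_f - m)| ≥ q - k + 2, where D_f is the direction set of f. -/

import Mathlib

open Pointwise

variable {F : Type*} [Field F] [Fintype F]

/-- The set of directions determined by the graph of `f`. -/
def dirs (f : F → F) : Set F := {d | ∃ x y : F, x ≠ y ∧ d = (f x - f y) / (x - y)}

/-- The set of inverses of the nonzero elements of `A`. -/
def invSet (A : Set F) : Set F := {b | ∃ a ∈ A, a ≠ 0 ∧ b = a⁻¹}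

theorem stmt4 (f : F → F) (m b : F) (k : ℕ) (hk1 : 1 < k) (hkq : k < Fintype.card F)
    (hmeet : {x : F | f x = m * x + b}.ncard = k) :
    Fintype.card F - k + 2 ≤
      (invSet ((fun d => d - m) '' dirs f) * ((fun d => d - m) '' dirs f)).ncard := by
  set S : Set F := {x | f x = m * x + b} with hSdef
  set E : Set F := (fun d => d - m) '' dirs f with hEdef
  -- two distinct points on the line
  obtain ⟨x1, x2, hx1, hx2, hx12⟩ :=
    (Set.one_lt_ncard_iff (Set.toFinite S)).1 (hmeet ▸ hk1)
  have hfx1 : f x1 = m * x1 + b := hx1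
  have hfx2 : f x2 = m * x2 + b := hx2
  -- complement has cardinality q - k
  have hcompl : Sᶜ.ncard = Fintype.card F - k := by
    have := Set.ncard_add_ncard_compl S (Set.toFinite S) (Set.toFinite Sᶜ)
    rw [hmeet] at this
    have hcard : Nat.card F = Fintype.card F := Nat.card_eq_fintype_card
    omega
  -- key membership: for x ∈ S, y ∉ S, the quantity (m*y+b-f y)/(x-y) ∈ E and ≠ 0
  have hxy_ne : ∀ x ∈ S, ∀ y ∉ S, x ≠ y := by
    rintro x hx y hy rfl; exact hy hx
  have key : ∀ x ∈ S, ∀ y ∉ S,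
      (m * y + b - f y) / (x - y) ∈ E ∧ (m * y + b - f y) / (x - y) ≠ 0 := by
    intro x hx y hy
    have hne : x ≠ y := hxy_ne x hx y hy
    have hsub : x - y ≠ 0 := sub_ne_zero.2 hne
    have hc : m * y + b - f y ≠ 0 := by
      intro h; apply hy; simp only [hSdef, Set.mem_setOf_eq]; linear_combination -h
    have hval : (f x - f y) / (x - y) - m = (m * y + b - f y) / (x - y) := by
      have hfx : f x = m * x + b := hx
      rw [eq_div_iff hsub, sub_mul, div_mul_cancel₀ _ hsub]
      linear_combination hfx
    constructor
    · exact ⟨(f x - f y) / (x - y), ⟨x, y, hne, rfl⟩, hval⟩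
    · exact div_ne_zero hc hsub
  -- the target set
  set g : F → F := fun y => (x1 - y) / (x2 - y) with hg
  set T : Set F := insert (0 : F) (insert 1 (g '' Sᶜ)) with hT
  have hsubset : T ⊆ invSet E * E := by
    rintro t (rfl | rfl | ⟨y, hy, rfl⟩)
    · -- 0 ∈ invSet E * E
      obtain ⟨y0, hy0⟩ : Sᶜ.Nonempty := by
        rw [← Set.ncard_pos (Set.toFinite _), hcompl]; omega
      obtain ⟨ha, hane⟩ := key x1 hx1 y0 hy0
      have hslope : (f x1 - f x2) / (x1 - x2) = m := by
        rw [hfx1, hfx2, div_eq_iff (sub_ne_zero.2 hx12)]; ring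
      have h0 : (0 : F) ∈ E := ⟨(f x1 - f x2) / (x1 - x2), ⟨x1, x2, hx12, rfl⟩,
        by simp [hslope]⟩
      have : (0 : F) = ((m * y0 + b - f y0) / (x1 - y0))⁻¹ * 0 := by ring
      rw [this]
      exact Set.mul_mem_mul ⟨_, ha, hane, rfl⟩ h0
    · obtain ⟨y0, hy0⟩ : Sᶜ.Nonempty := by
        rw [← Set.ncard_pos (Set.toFinite _), hcompl]; omega
      obtain ⟨ha, hane⟩ := key x1 hx1 y0 hy0
      have : (1 : F) = ((m * y0 + b - f y0) / (x1 - y0))⁻¹ *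
          ((m * y0 + b - f y0) / (x1 - y0)) := by
        rw [inv_mul_cancel₀ hane]
      rw [this]
      exact Set.mul_mem_mul ⟨_, ha, hane, rfl⟩ ha
    · obtain ⟨ha1, hane1⟩ := key x1 hx1 y hy
      obtain ⟨ha2, _⟩ := key x2 hx2 y hy
      have h1 : x1 - y ≠ 0 := sub_ne_zero.2 (hxy_ne x1 hx1 y hy)
      have h2 : x2 - y ≠ 0 := sub_ne_zero.2 (hxy_ne x2 hx2 y hy)
      have hc : m * y + b - f y ≠ 0 := by
        intro h; apply hy; simp only [hSdef, Set.mem_setOf_eq]; linear_combination -h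
      have : g y = ((m * y + b - f y) / (x1 - y))⁻¹ * ((m * y + b - f y) / (x2 - y)) := by
        rw [hg]; field_simp
        rw [div_self (by rwa [mul_comm y m])]
      rw [this]
      exact Set.mul_mem_mul ⟨_, ha1, hane1, rfl⟩ ha2
  -- injectivity of g on Sᶜ
  have hinj : Set.InjOn g Sᶜ := by
    intro y hy z hz hgyz
    have h2y : x2 - y ≠ 0 := sub_ne_zero.2 (hxy_ne x2 hx2 y hy)
    have h2z : x2 - z ≠ 0 := sub_ne_zero.2 (hxy_ne x2 hx2 z hz)
    rw [hg, div_eq_div_iff h2y h2z] at hgyz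
    have : (x1 - x2) * (y - z) = 0 := by linear_combination hgyz
    rcases mul_eq_zero.1 this with h | h
    · exact absurd (sub_eq_zero.1 h) hx12
    · exact sub_eq_zero.1 h
  have himg : (g '' Sᶜ).ncard = Fintype.card F - k := by
    rw [Set.ncard_image_of_injOn hinj, hcompl]
  have h1img : (1 : F) ∉ g '' Sᶜ := by
    rintro ⟨y, hy, hgy⟩
    have h2y : x2 - y ≠ 0 := sub_ne_zero.2 (hxy_ne x2 hx2 y hy)
    rw [hg, div_eq_one_iff_eq h2y] at hgy
    exact hx12 (sub_left_inj.1 hgy)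
  have h0img : (0 : F) ∉ insert 1 (g '' Sᶜ) := by
    rintro (h | ⟨y, hy, hgy⟩)
    · exact one_ne_zero h.symm
    · have h1y : x1 - y ≠ 0 := sub_ne_zero.2 (hxy_ne x1 hx1 y hy)
      have h2y : x2 - y ≠ 0 := sub_ne_zero.2 (hxy_ne x2 hx2 y hy)
      rw [hg] at hgy
      rcases div_eq_zero_iff.1 hgy with h | h
      · exact h1y h
      · exact h2y h
  have hTcard : T.ncard = Fintype.card F - k + 2 := by
    rw [hT, Set.ncard_insert_of_notMem h0img (Set.toFinite _),
      Set.ncard_insert_of_notMem h1img (Set.toFinite _), himg]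
  rw [← hTcard]
  exact Set.ncard_le_ncard hsubset (Set.toFinite _)
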